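/- If there exist t, s ∈ [a,b] with E(t) ≠ E(s), then g is twice differentiable on ℝ and its second derivative satisfies 0 < g''(z) ≤ sup_{t,s ∈ [a,b]} (1/2)·(E(t) − E(s))² for every z ∈ ℝ; in particular g'' is bounded and strictly positive. -/

import Mathlib

open MeasureTheory Set intervalIntegral Real

/-- Interval integrability from continuity on `Icc`. -/
lemma stmt5_intInt {a b : ℝ} (hab : a ≤ b) {f : ℝ → ℝ}
    (hf : ContinuousOn f (Set.Icc a b)) : IntervalIntegrable f volume a b := by
  apply ContinuousOn.intervalIntegrable
  rwa [Set.uIcc_of_le hab]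

/-- A nonnegative continuous function positive at a point of `[a,b]` has positive integral. -/
lemma stmt5_pos {a b : ℝ} (hab : a < b) {f : ℝ → ℝ}
    (hf : ContinuousOn f (Set.Icc a b)) (h0 : ∀ t, 0 ≤ f t)
    {c : ℝ} (hc : c ∈ Set.Icc a b) (hfc : 0 < f c) :
    0 < ∫ t in a..b, f t := by
  obtain ⟨δ, hδ, hball⟩ := Metric.continuousWithinAt_iff.1 (hf c hc) (f c / 2) (by linarith)
  set u := max a (c - δ / 2) with hu
  set v := min b (c + δ / 2) with hv
  have hau : a ≤ u := le_max_left _ _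
  have hvb : v ≤ b := min_le_left _ _
  have huc : u ≤ c := max_le hc.1 (by linarith)
  have hcv : c ≤ v := le_min hc.2 (by linarith)
  have huv : u < v := by
    rcases eq_or_lt_of_le hc.1 with h | h
    · exact lt_of_le_of_lt huc (lt_min (h ▸ hab) (by linarith))
    · exact lt_of_lt_of_le (max_lt h (by linarith)) hcv
  have key : ∀ x ∈ Set.Icc u v, f c / 2 ≤ f x := by
    intro x hx
    have hx' : x ∈ Set.Icc a b := ⟨le_trans hau hx.1, le_trans hx.2 hvb⟩
    have hd : dist x c < δ := by
      rw [Real.dist_eq, abs_lt]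
      constructor
      · have : c - δ / 2 ≤ u := le_max_right _ _
        have := hx.1; linarith
      · have : v ≤ c + δ / 2 := min_le_right _ _
        have := hx.2; linarith
    have := hball hx' hd
    rw [Real.dist_eq, abs_lt] at this
    linarith [this.1]
  have hint : IntervalIntegrable f volume a b := stmt5_intInt hab.le hf
  have hiau : IntervalIntegrable f volume a u := hint.mono_set (by
    rw [Set.uIcc_of_le hau, Set.uIcc_of_le hab.le]
    exact Set.Icc_subset_Icc le_rfl (le_trans huv.le hvb))
  have hiuv : IntervalIntegrable f volume u v := hint.mono_set (by
    rw [Set.uIcc_of_le huv.le, Set.uIcc_of_le hab.le]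
    exact Set.Icc_subset_Icc hau hvb)
  have hivb : IntervalIntegrable f volume v b := hint.mono_set (by
    rw [Set.uIcc_of_le hvb, Set.uIcc_of_le hab.le]
    exact Set.Icc_subset_Icc (le_trans hau huv.le) le_rfl)
  have hiub : IntervalIntegrable f volume u b := hint.mono_set (by
    rw [Set.uIcc_of_le (le_trans huv.le hvb), Set.uIcc_of_le hab.le]
    exact Set.Icc_subset_Icc hau le_rfl)
  have e1 : (∫ t in a..u, f t) + ∫ t in u..b, f t = ∫ t in a..b, f t :=
    intervalIntegral.integral_add_adjacent_intervals hiau hiub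
  have e2 : (∫ t in u..v, f t) + ∫ t in v..b, f t = ∫ t in u..b, f t :=
    intervalIntegral.integral_add_adjacent_intervals hiuv hivb
  have n1 : 0 ≤ ∫ t in a..u, f t :=
    intervalIntegral.integral_nonneg hau (fun x _ => h0 x)
  have n3 : 0 ≤ ∫ t in v..b, f t :=
    intervalIntegral.integral_nonneg hvb (fun x _ => h0 x)
  have n2 : 0 < ∫ t in u..v, f t := by
    have hmono : (∫ _ in u..v, f c / 2) ≤ ∫ t in u..v, f t :=
      intervalIntegral.integral_mono_on huv.le intervalIntegrable_const hiuv key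
    rw [intervalIntegral.integral_const, smul_eq_mul] at hmono
    nlinarith
  linarith

/-- Derivative of a parametric exponential integral. -/
lemma stmt5_deriv {a b : ℝ} (hab : a < b) {E : ℝ → ℝ}
    (hE : ContinuousOn E (Set.Icc a b)) {φ : ℝ → ℝ}
    (hφ : ContinuousOn φ (Set.Icc a b)) (z₀ : ℝ) :
    HasDerivAt (fun z => ∫ t in a..b, φ t * Real.exp (z * E t))
      (∫ t in a..b, (φ t * E t) * Real.exp (z₀ * E t)) z₀ := by
  obtain ⟨M, hM⟩ := (isCompact_Icc (a := a) (b := b)).exists_bound_of_continuousOn hE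
  obtain ⟨C, hC⟩ := (isCompact_Icc (a := a) (b := b)).exists_bound_of_continuousOn hφ
  have hsub : Set.uIoc a b ⊆ Set.Icc a b := by
    rw [Set.uIoc_of_le hab.le]; exact Set.Ioc_subset_Icc_self
  have hcont : ∀ z : ℝ, ContinuousOn (fun t => φ t * Real.exp (z * E t)) (Set.Icc a b) :=
    fun z => hφ.mul (Real.continuous_exp.comp_continuousOn (continuousOn_const.mul hE))
  have hcont' : ∀ z : ℝ, ContinuousOn (fun t => (φ t * E t) * Real.exp (z * E t)) (Set.Icc a b) :=
    fun z => (hφ.mul hE).mul (Real.continuous_exp.comp_continuousOn (continuousOn_const.mul hE))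
  have key := intervalIntegral.hasDerivAt_integral_of_dominated_loc_of_deriv_le
    (F := fun z t => φ t * Real.exp (z * E t))
    (F' := fun z t => (φ t * E t) * Real.exp (z * E t))
    (bound := fun _ => C * M * Real.exp ((|z₀| + 1) * M))
    (μ := volume) (a := a) (b := b) (x₀ := z₀) (s := Metric.ball z₀ 1) (Metric.ball_mem_nhds z₀ one_pos)
    (Filter.Eventually.of_forall fun z =>
      ((hcont z).mono hsub).aestronglyMeasurable measurableSet_uIoc)
    (stmt5_intInt hab.le (hcont z₀))
    (((hcont' z₀).mono hsub).aestronglyMeasurable measurableSet_uIoc)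
    (Filter.Eventually.of_forall fun t ht x hx => ?_)
    intervalIntegrable_const
    (Filter.Eventually.of_forall fun t _ x _ => ?_)
  · exact key.2
  · -- bound
    have htI : t ∈ Set.Icc a b := hsub ht
    have h1 : |E t| ≤ M := by simpa using hM t htI
    have h2 : |φ t| ≤ C := by simpa using hC t htI
    have hM0 : 0 ≤ M := le_trans (abs_nonneg _) h1
    have hC0 : 0 ≤ C := le_trans (abs_nonneg _) h2
    have hx1 : |x| ≤ |z₀| + 1 := by
      have := mem_ball_iff_norm.1 hx
      have : |x - z₀| < 1 := by simpa [Real.norm_eq_abs] using this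
      have h := abs_sub_abs_le_abs_sub x z₀
      linarith
    have hexp : Real.exp (x * E t) ≤ Real.exp ((|z₀| + 1) * M) := by
      apply Real.exp_le_exp.2
      calc x * E t ≤ |x * E t| := le_abs_self _
        _ = |x| * |E t| := abs_mul _ _
        _ ≤ (|z₀| + 1) * M := by
            apply mul_le_mul hx1 h1 (abs_nonneg _) (by positivity)
    calc ‖(φ t * E t) * Real.exp (x * E t)‖
        = |φ t| * |E t| * Real.exp (x * E t) := by
          rw [Real.norm_eq_abs, abs_mul, abs_mul, abs_of_pos (Real.exp_pos _)]
      _ ≤ C * M * Real.exp ((|z₀| + 1) * M) := by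
          apply mul_le_mul (mul_le_mul h2 h1 (abs_nonneg _) hC0) hexp (Real.exp_pos _).le
          positivity
  · -- differentiability
    have h1 : HasDerivAt (fun x : ℝ => x * E t) (E t) x := hasDerivAt_mul_const (E t)
    have h2 : HasDerivAt (fun x : ℝ => Real.exp (x * E t))
        (Real.exp (x * E t) * E t) x := h1.exp
    have := h2.const_mul (φ t)
    convert this using 1
    · rfl
    ring

/-- Context: `a < b`, `E` continuous on `[a,b]`,
`g z = log( (1/(b-a)) * ∫_a^b exp(z * E t) dt )`.
Statement: if there exist `t, s ∈ [a,b]` with `E t ≠ E s`, then `g` is twice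
differentiable on `ℝ` and `0 < g''(z) ≤ sup_{t,s ∈ [a,b]} (1/2)(E(t) − E(s))²`
for every `z`; in particular `g''` is bounded and strictly positive. -/
theorem stmt_5 (a b : ℝ) (hab : a < b) (E : ℝ → ℝ)
    (hE : ContinuousOn E (Set.Icc a b))
    (g : ℝ → ℝ)
    (hg : ∀ z : ℝ, g z = Real.log ((1 / (b - a)) * ∫ t in a..b, Real.exp (z * E t)))
    (hne : ∃ t ∈ Set.Icc a b, ∃ s ∈ Set.Icc a b, E t ≠ E s) :
    Differentiable ℝ g ∧ Differentiable ℝ (deriv g) ∧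
      ∀ z : ℝ,
        0 < deriv (deriv g) z ∧
        deriv (deriv g) z ≤ sSup {x : ℝ | ∃ t ∈ Set.Icc a b, ∃ s ∈ Set.Icc a b,
          x = (1 / 2) * (E t - E s) ^ 2} := by
  obtain ⟨t₀, ht₀, s₀, hs₀, hts⟩ := hne
  obtain ⟨M, hM⟩ := (isCompact_Icc (a := a) (b := b)).exists_bound_of_continuousOn hE
  set F : ℝ → ℝ := fun z => ∫ t in a..b, Real.exp (z * E t) with hF
  set F1 : ℝ → ℝ := fun z => ∫ t in a..b, E t * Real.exp (z * E t) with hF1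
  set F2 : ℝ → ℝ := fun z => ∫ t in a..b, E t ^ 2 * Real.exp (z * E t) with hF2
  have hcontE : ∀ z : ℝ, ContinuousOn (fun t => Real.exp (z * E t)) (Set.Icc a b) :=
    fun z => Real.continuous_exp.comp_continuousOn (continuousOn_const.mul hE)
  have hc1 : ∀ z : ℝ, ContinuousOn (fun t => E t * Real.exp (z * E t)) (Set.Icc a b) :=
    fun z => hE.mul (hcontE z)
  have hc2 : ∀ z : ℝ, ContinuousOn (fun t => E t ^ 2 * Real.exp (z * E t)) (Set.Icc a b) :=
    fun z => (hE.pow 2).mul (hcontE z)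
  have hi0 : ∀ z : ℝ, IntervalIntegrable (fun t => Real.exp (z * E t)) volume a b :=
    fun z => stmt5_intInt hab.le (hcontE z)
  have hi1 : ∀ z : ℝ, IntervalIntegrable (fun t => E t * Real.exp (z * E t)) volume a b :=
    fun z => stmt5_intInt hab.le (hc1 z)
  have hi2 : ∀ z : ℝ, IntervalIntegrable (fun t => E t ^ 2 * Real.exp (z * E t)) volume a b :=
    fun z => stmt5_intInt hab.le (hc2 z)
  have hFpos : ∀ z : ℝ, 0 < F z :=
    fun z => intervalIntegral_pos_of_pos (hi0 z) (fun t => Real.exp_pos _) hab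
  have hdF : ∀ z : ℝ, HasDerivAt F (F1 z) z := by
    intro z
    have := stmt5_deriv hab hE (φ := fun _ => (1 : ℝ)) continuousOn_const z
    simpa [hF, hF1] using this
  have hdF1 : ∀ z : ℝ, HasDerivAt F1 (F2 z) z := by
    intro z
    have := stmt5_deriv hab hE (φ := E) hE z
    simpa [hF1, hF2, pow_two] using this
  have hgf : g = fun z => Real.log (1 / (b - a)) + Real.log (F z) := by
    funext z
    rw [hg z, Real.log_mul (one_div_ne_zero (sub_ne_zero.2 hab.ne')) (hFpos z).ne']
  have hg' : ∀ z : ℝ, HasDerivAt g (F1 z / F z) z := by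
    intro z
    rw [hgf]
    exact ((hdF z).log (hFpos z).ne').const_add _
  have hdiffg : Differentiable ℝ g := fun z => (hg' z).differentiableAt
  have hderivg : deriv g = fun z => F1 z / F z := funext fun z => (hg' z).deriv
  have hg'' : ∀ z : ℝ, HasDerivAt (fun z => F1 z / F z)
      ((F2 z * F z - F1 z * F1 z) / F z ^ 2) z :=
    fun z => (hdF1 z).div (hdF z) (hFpos z).ne'
  have hdiffg' : Differentiable ℝ (deriv g) := by
    rw [hderivg]; exact fun z => (hg'' z).differentiableAt
  have hderiv2 : ∀ z : ℝ, deriv (deriv g) z = (F2 z * F z - F1 z * F1 z) / F z ^ 2 := by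
    intro z; rw [hderivg]; exact (hg'' z).deriv
  refine ⟨hdiffg, hdiffg', fun z => ?_⟩
  -- inner identity
  have Hin : ∀ t : ℝ, (∫ s in a..b, (E t - E s) ^ 2 *
      (Real.exp (z * E t) * Real.exp (z * E s))) =
      Real.exp (z * E t) * (E t ^ 2 * F z - 2 * E t * F1 z + F2 z) := by
    intro t
    have hrw : (fun s => (E t - E s) ^ 2 * (Real.exp (z * E t) * Real.exp (z * E s))) =
        fun s => ((Real.exp (z * E t) * E t ^ 2) * Real.exp (z * E s) +
          Real.exp (z * E t) * (E s ^ 2 * Real.exp (z * E s))) -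
          (Real.exp (z * E t) * (2 * E t)) * (E s * Real.exp (z * E s)) :=
      funext fun s => by ring
    rw [hrw, intervalIntegral.integral_sub
        (((hi0 z).const_mul _).add ((hi2 z).const_mul _)) ((hi1 z).const_mul _),
      intervalIntegral.integral_add ((hi0 z).const_mul _) ((hi2 z).const_mul _),
      intervalIntegral.integral_const_mul, intervalIntegral.integral_const_mul,
      intervalIntegral.integral_const_mul]
    ring
  -- the combined integrand
  set φ : ℝ → ℝ := fun t => Real.exp (z * E t) * (E t ^ 2 * F z - 2 * E t * F1 z + F2 z)
    with hφdef
  have hφeq : ∀ t : ℝ, φ t = ∫ s in a..b, (E t - E s) ^ 2 *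
      (Real.exp (z * E t) * Real.exp (z * E s)) := fun t => (Hin t).symm
  have hφ0 : ∀ t, 0 ≤ φ t := by
    intro t
    rw [hφeq t]
    exact intervalIntegral.integral_nonneg hab.le
      (fun s _ => mul_nonneg (sq_nonneg _) (mul_pos (Real.exp_pos _) (Real.exp_pos _)).le)
  have hφcont : ContinuousOn φ (Set.Icc a b) :=
    (hcontE z).mul (((hE.pow 2).mul continuousOn_const).sub
      ((continuousOn_const.mul hE).mul continuousOn_const) |>.add continuousOn_const)
  have hφint : IntervalIntegrable φ volume a b := stmt5_intInt hab.le hφcont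
  -- outer identity
  have Houter : (∫ t in a..b, φ t) = 2 * (F2 z * F z - F1 z * F1 z) := by
    have hrw : φ = fun t => ((F z) * (E t ^ 2 * Real.exp (z * E t)) +
        (F2 z) * Real.exp (z * E t)) - (2 * F1 z) * (E t * Real.exp (z * E t)) :=
      funext fun t => by rw [hφdef]; ring
    rw [hrw, intervalIntegral.integral_sub
        (((hi2 z).const_mul _).add ((hi0 z).const_mul _)) ((hi1 z).const_mul _),
      intervalIntegral.integral_add ((hi2 z).const_mul _) ((hi0 z).const_mul _),
      intervalIntegral.integral_const_mul, intervalIntegral.integral_const_mul,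
      intervalIntegral.integral_const_mul]
    rw [show (∫ t in a..b, Real.exp (z * E t)) = F z from rfl,
      show (∫ t in a..b, E t * Real.exp (z * E t)) = F1 z from rfl,
      show (∫ t in a..b, E t ^ 2 * Real.exp (z * E t)) = F2 z from rfl]
    ring
  -- positivity of the double integral
  have hφt₀ : 0 < φ t₀ := by
    rw [hφeq t₀]
    apply stmt5_pos hab (f := fun s => (E t₀ - E s) ^ 2 *
      (Real.exp (z * E t₀) * Real.exp (z * E s)))
      (((continuousOn_const.sub hE).pow 2).mul
        (continuousOn_const.mul (hcontE z)))
      (fun s => by positivity) hs₀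
    have : E t₀ - E s₀ ≠ 0 := sub_ne_zero.2 hts
    positivity
  have hDpos : 0 < ∫ t in a..b, φ t := stmt5_pos hab hφcont hφ0 ht₀ hφt₀
  have hVpos : 0 < F2 z * F z - F1 z * F1 z := by
    rw [Houter] at hDpos; linarith
  -- the sup
  set S : Set ℝ := {x : ℝ | ∃ t ∈ Set.Icc a b, ∃ s ∈ Set.Icc a b,
    x = (1 / 2) * (E t - E s) ^ 2} with hSdef
  have hSne : ((1 : ℝ) / 2) * (E t₀ - E s₀) ^ 2 ∈ S := ⟨t₀, ht₀, s₀, hs₀, rfl⟩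
  have hSbdd : BddAbove S := by
    refine ⟨(1 / 2) * (2 * M) ^ 2, ?_⟩
    rintro x ⟨t, ht, s, hs, rfl⟩
    have h1 : |E t| ≤ M := by simpa using hM t ht
    have h2 : |E s| ≤ M := by simpa using hM s hs
    have h3 := abs_nonneg (E t)
    have h4 := le_abs_self (E t)
    have h5 := neg_abs_le (E t)
    have h6 := le_abs_self (E s)
    have h7 := neg_abs_le (E s)
    nlinarith
  set K : ℝ := sSup S with hK
  have hle2K : ∀ t ∈ Set.Icc a b, ∀ s ∈ Set.Icc a b, (E t - E s) ^ 2 ≤ 2 * K := by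
    intro t ht s hs
    have := le_csSup hSbdd (⟨t, ht, s, hs, rfl⟩ : (1 / 2) * (E t - E s) ^ 2 ∈ S)
    linarith
  -- upper bound on φ on Icc
  have hφle : ∀ t ∈ Set.Icc a b, φ t ≤ 2 * K * (Real.exp (z * E t) * F z) := by
    intro t ht
    rw [hφeq t]
    have hmono : (∫ s in a..b, (E t - E s) ^ 2 *
        (Real.exp (z * E t) * Real.exp (z * E s))) ≤
        ∫ s in a..b, (2 * K * Real.exp (z * E t)) * Real.exp (z * E s) := by
      apply intervalIntegral.integral_mono_on hab.le
        (stmt5_intInt hab.le (((continuousOn_const.sub hE).pow 2).mul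
          (continuousOn_const.mul (hcontE z))))
        ((hi0 z).const_mul _)
      intro s hs
      have h1 := hle2K t ht s hs
      have h2 := (Real.exp_pos (z * E s)).le
      have h3 := (Real.exp_pos (z * E t)).le
      show (E t - E s) ^ 2 * (Real.exp (z * E t) * Real.exp (z * E s)) ≤
        (2 * K * Real.exp (z * E t)) * Real.exp (z * E s)
      nlinarith [mul_le_mul_of_nonneg_right h1 (mul_nonneg h3 h2)]
    rw [intervalIntegral.integral_const_mul] at hmono
    calc (∫ s in a..b, (E t - E s) ^ 2 * (Real.exp (z * E t) * Real.exp (z * E s)))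
        ≤ 2 * K * Real.exp (z * E t) * F z := hmono
      _ = 2 * K * (Real.exp (z * E t) * F z) := by ring
  have hDle : (∫ t in a..b, φ t) ≤ 2 * K * F z ^ 2 := by
    have hmono : (∫ t in a..b, φ t) ≤
        ∫ t in a..b, (2 * K * F z) * Real.exp (z * E t) := by
      apply intervalIntegral.integral_mono_on hab.le hφint ((hi0 z).const_mul _)
      intro t ht
      have := hφle t ht
      linarith [this]
    rw [intervalIntegral.integral_const_mul] at hmono
    calc (∫ t in a..b, φ t) ≤ 2 * K * F z * F z := hmono
      _ = 2 * K * F z ^ 2 := by ring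
  have hVle : F2 z * F z - F1 z * F1 z ≤ K * F z ^ 2 := by
    rw [Houter] at hDle; linarith
  constructor
  · rw [hderiv2 z]
    exact div_pos hVpos (pow_pos (hFpos z) 2)
  · rw [hderiv2 z]
    rw [div_le_iff₀ (pow_pos (hFpos z) 2)]
    exact hVle
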